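/- Let R = k[ℝ≥0^n] and let R ⊗_k R have variables x₁,…,x_n (from the left factor) and y₁,…,y_n (from the right factor). Then the quotient of R ⊗_k R by the ideal generated by {x_i^ε − y_i^ε : 1 ≤ i ≤ n, ε > 0} is isomorphic as a ring to R. -/

import Mathlib

open scoped NNReal TensorProduct
/-- The n-variable real-exponent polynomial ring R = k[ℝ≥0ⁿ]. -/
abbrev Rn (k : Type) [Field k] (n : ℕ) := AddMonoidAlgebra k (Fin n → ℝ≥0)
/-- The monomial x_i^ε in R. -/
noncomputable def xPow (k : Type) [Field k] (n : ℕ) (i : Fin n) (ε : ℝ≥0) : Rn k n :=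
  AddMonoidAlgebra.single (Pi.single i ε) 1
/-- The ideal ⟨x_i^ε ⊗ 1 − 1 ⊗ x_i^ε : 1 ≤ i ≤ n, ε > 0⟩ of R ⊗ₖ R. -/
noncomputable def diffIdeal (k : Type) [Field k] (n : ℕ) : Ideal (Rn k n ⊗[k] Rn k n) :=
  Ideal.span {f | ∃ (i : Fin n) (ε : ℝ≥0), 0 < ε ∧
    f = xPow k n i ε ⊗ₜ[k] 1 - 1 ⊗ₜ[k] xPow k n i ε}

lemma adjoin_xPow_top (k : Type) [Field k] (n : ℕ) :
    Algebra.adjoin k {f : Rn k n | ∃ i ε, f = xPow k n i ε} = ⊤ := by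
  rw [eq_top_iff]
  intro f hf
  clear hf
  induction f using AddMonoidAlgebra.induction_on with
  | of g =>
    rw [AddMonoidAlgebra.of_apply, toAdd_ofAdd]
    have key : ∀ s : Finset (Fin n),
        (AddMonoidAlgebra.single (∑ i ∈ s, Pi.single i (g i)) (1 : k) : Rn k n)
          ∈ Algebra.adjoin k {f : Rn k n | ∃ i ε, f = xPow k n i ε} := by
      intro s
      induction s using Finset.induction_on with
      | empty =>
        simpa [← AddMonoidAlgebra.one_def] using Subalgebra.one_mem (Algebra.adjoin k {f : Rn k n | ∃ i ε, f = xPow k n i ε})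
      | insert _ _ hx ih =>
        rename_i a s'
        rw [Finset.sum_insert hx]
        have : (AddMonoidAlgebra.single (Pi.single a (g a) + ∑ i ∈ s', Pi.single i (g i))
            (1 : k) : Rn k n) =
            AddMonoidAlgebra.single (Pi.single a (g a)) 1 *
              AddMonoidAlgebra.single (∑ i ∈ s', Pi.single i (g i)) 1 := by
          rw [AddMonoidAlgebra.single_mul_single, one_mul]
        rw [this]
        exact Subalgebra.mul_mem _ (Algebra.subset_adjoin ⟨a, g a, rfl⟩) ih
    have := key Finset.univ
    rwa [Finset.univ_sum_single] at this
  | add f g hf hg => exact Subalgebra.add_mem _ hf hg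
  | smul r f hf => exact Subalgebra.smul_mem _ hf r

lemma tmul_sub_mem (k : Type) [Field k] (n : ℕ) (b : Rn k n) :
    b ⊗ₜ[k] (1 : Rn k n) - (1 : Rn k n) ⊗ₜ[k] b ∈ diffIdeal k n := by
  have hb : b ∈ Algebra.adjoin k {f : Rn k n | ∃ i ε, f = xPow k n i ε} := by
    rw [adjoin_xPow_top]; trivial
  induction hb using Algebra.adjoin_induction with
  | mem x hx =>
    obtain ⟨i, ε, rfl⟩ := hx
    rcases eq_or_lt_of_le (zero_le (a := ε)) with h0 | hpos
    · have : xPow k n i ε = 1 := by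
        simp [xPow, ← h0, AddMonoidAlgebra.one_def]
      rw [this]
      simp
    · exact Ideal.subset_span ⟨i, ε, hpos, rfl⟩
  | algebraMap r =>
    have : (algebraMap k (Rn k n) r) ⊗ₜ[k] (1 : Rn k n)
        = (1 : Rn k n) ⊗ₜ[k] (algebraMap k (Rn k n) r) := by
      rw [Algebra.algebraMap_eq_smul_one, TensorProduct.smul_tmul, TensorProduct.tmul_smul]
    rw [this, sub_self]
    exact Ideal.zero_mem _
  | add x y hx hy hx' hy' =>
    have : (x + y) ⊗ₜ[k] (1 : Rn k n) - (1 : Rn k n) ⊗ₜ[k] (x + y)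
        = (x ⊗ₜ[k] 1 - 1 ⊗ₜ[k] x) + (y ⊗ₜ[k] 1 - 1 ⊗ₜ[k] y) := by
      rw [TensorProduct.add_tmul, TensorProduct.tmul_add]; abel
    rw [this]
    exact Ideal.add_mem _ hx' hy'
  | mul x y hx hy hx' hy' =>
    have h1 := Ideal.mul_mem_left _ (x ⊗ₜ[k] (1 : Rn k n)) hy'
    have h2 := Ideal.mul_mem_left _ ((1 : Rn k n) ⊗ₜ[k] y) hx'
    have key : (x * y) ⊗ₜ[k] (1 : Rn k n) - (1 : Rn k n) ⊗ₜ[k] (x * y)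
        = x ⊗ₜ[k] (1 : Rn k n) * (y ⊗ₜ[k] 1 - 1 ⊗ₜ[k] y)
          + (1 : Rn k n) ⊗ₜ[k] y * (x ⊗ₜ[k] 1 - 1 ⊗ₜ[k] x) := by
      simp only [mul_sub, Algebra.TensorProduct.tmul_mul_tmul, mul_one, one_mul]
      ring_nf
    rw [key]
    exact Ideal.add_mem _ h1 h2

set_option maxHeartbeats 2000000 in
set_option synthInstance.maxHeartbeats 1000000 in
/-- (R ⊗ₖ R) / ⟨x_i^ε − y_i^ε : i, ε > 0⟩ ≅ R as rings. -/
theorem stmt15 (k : Type) [Field k] (n : ℕ) :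
    Nonempty (((Rn k n ⊗[k] Rn k n) ⧸ diffIdeal k n) ≃+* Rn k n) := by
  set I := diffIdeal k n
  -- multiplication map
  set μ : Rn k n ⊗[k] Rn k n →ₐ[k] Rn k n := Algebra.TensorProduct.lmul' k
  have hle : I ≤ RingHom.ker μ.toRingHom := by
    refine Ideal.span_le.mpr ?_
    rintro f ⟨i, ε, hε, rfl⟩
    simp only [SetLike.mem_coe, RingHom.mem_ker, AlgHom.toRingHom_eq_coe, RingHom.coe_coe,
      map_sub, μ, Algebra.TensorProduct.lmul'_apply_tmul, mul_one, one_mul, sub_self]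
  have hI : ∀ a ∈ I, μ.toRingHom a = 0 := fun a ha => hle ha
  let φ : (Rn k n ⊗[k] Rn k n) ⧸ I →+* Rn k n := Ideal.Quotient.lift I μ.toRingHom hI
  let ψ : Rn k n →+* (Rn k n ⊗[k] Rn k n) ⧸ I :=
    (Ideal.Quotient.mk I).comp (Algebra.TensorProduct.includeLeftRingHom)
  have hψφ : ∀ x : Rn k n ⊗[k] Rn k n, ψ (μ x) = Ideal.Quotient.mk I x := by
    intro x
    induction x using TensorProduct.induction_on with
    | zero => simp
    | tmul a b =>
      show (Ideal.Quotient.mk I) ((a * b) ⊗ₜ[k] 1) = Ideal.Quotient.mk I (a ⊗ₜ[k] b)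
      rw [Ideal.Quotient.eq]
      have h := Ideal.mul_mem_left I (a ⊗ₜ[k] (1 : Rn k n)) (tmul_sub_mem k n b)
      have : (a * b) ⊗ₜ[k] (1 : Rn k n) - a ⊗ₜ[k] b
          = a ⊗ₜ[k] (1 : Rn k n) * (b ⊗ₜ[k] 1 - 1 ⊗ₜ[k] b) := by
        simp only [mul_sub, Algebra.TensorProduct.tmul_mul_tmul, mul_one, one_mul]
      rw [this]
      exact h
    | add x y hx hy =>
      rw [map_add, map_add, hx, hy, map_add]
  refine ⟨(RingEquiv.ofRingHom ψ φ ?_ ?_).symm⟩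
  · refine RingHom.ext fun x => ?_
    obtain ⟨y, rfl⟩ := Ideal.Quotient.mk_surjective x
    exact hψφ y
  · refine RingHom.ext fun r => ?_
    show μ (r ⊗ₜ[k] 1) = r
    simp [μ, Algebra.TensorProduct.lmul'_apply_tmul]
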